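/- Every module endomorphism f of V_α satisfies f(Ŝ_α) = c·Ŝ_α for some scalar c; consequently the endomorphism ring of V_α is isomorphic to the ground field. -/

import Mathlib

/-- The 0-Hecke operator `π_{i+1}` on words `w : Fin n → ℕ`. -/
def heckeWord {n : ℕ} (i : Fin (n - 1)) (w : Fin n → ℕ) : Fin n → ℕ :=
  let p : Fin n := ⟨i, by have := i.isLt; omega⟩
  let q : Fin n := ⟨(i : ℕ) + 1, by have := i.isLt; omega⟩
  if w p < w q then w ∘ Equiv.swap p q else w

/-- A word is a `𝒴`-word if every occurrence of a letter `c+2` is preceded by an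
occurrence of `c+1`. -/
def IsYWordF {n : ℕ} (w : Fin n → ℕ) : Prop :=
  ∀ (p : Fin n) (c : ℕ), w p = c + 2 → ∃ q, q < p ∧ w q = c + 1

/-- A word has content `α`. -/
def WordHasContent {n : ℕ} (c : Composition n) (w : Fin n → ℕ) : Prop :=
  (∀ p, 1 ≤ w p ∧ w p ≤ c.length) ∧
  ∀ j : Fin c.length,
    (Finset.univ.filter fun p => w p = (j : ℕ) + 1).card = c.blocksFun j

/-- The quotient module `V_α = M_α / N_α`, realized with basis the `𝒴`-words of
content `α`. -/
abbrev Vmod (n : ℕ) (c : Composition n) :=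
  {w : Fin n → ℕ // WordHasContent c w ∧ IsYWordF w} →₀ ℚ

open Classical in
/-- The action of the 0-Hecke generator `π_{i+1}` on `V_α`: a basis `𝒴`-word is sent
to its image under `heckeWord` if that image is again a `𝒴`-word, and to `0`
otherwise (i.e. modulo the span `N_α` of non-`𝒴`-words). -/
noncomputable def heckeOp (n : ℕ) (c : Composition n) (i : Fin (n - 1)) :
    Vmod n c →ₗ[ℚ] Vmod n c :=
  Finsupp.lsum ℚ fun w =>
    LinearMap.toSpanSingleton ℚ (Vmod n c)
      (if h : WordHasContent c (heckeWord i w.val) ∧ IsYWordF (heckeWord i w.val)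
        then Finsupp.single (⟨heckeWord i w.val, h⟩ :
          {w : Fin n → ℕ // WordHasContent c w ∧ IsYWordF w}) (1 : ℚ)
        else 0)


/-- The sorted word `1^{α₁} 2^{α₂} ⋯ m^{α_m}`, i.e. the `𝒴`-word corresponding to the
super-standard tableau `Ŝ_α`. -/
def sortedWord {n : ℕ} (c : Composition n) : Fin n → ℕ :=
  fun p => (c.index p : ℕ) + 1

namespace VmodAux

/-- The set of `𝒴`-words of content `c`. -/
abbrev YW (n : ℕ) (c : Composition n) := {w : Fin n → ℕ // WordHasContent c w ∧ IsYWordF w}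

/-- The position `i` as an element of `Fin n`. -/
def posL {n : ℕ} (i : Fin (n - 1)) : Fin n := ⟨i, by have := i.isLt; omega⟩

/-- The position `i+1` as an element of `Fin n`. -/
def posR {n : ℕ} (i : Fin (n - 1)) : Fin n := ⟨(i : ℕ) + 1, by have := i.isLt; omega⟩

lemma heckeWord_def {n : ℕ} (i : Fin (n - 1)) (w : Fin n → ℕ) :
    heckeWord i w =
      if w (posL i) < w (posR i) then w ∘ Equiv.swap (posL i) (posR i) else w := rfl

open Classical in
lemma heckeOp_single {n : ℕ} {c : Composition n} (i : Fin (n - 1)) (w : YW n c) :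
    heckeOp n c i (Finsupp.single w 1) =
      if h : WordHasContent c (heckeWord i w.val) ∧ IsYWordF (heckeWord i w.val)
      then Finsupp.single (⟨heckeWord i w.val, h⟩ : YW n c) 1 else 0 := by
  simp only [heckeOp]
  rw [Finsupp.lsum_single, LinearMap.toSpanSingleton_apply, one_smul]

lemma index_mono {n : ℕ} (c : Composition n) {p q : Fin n} (h : (p : ℕ) ≤ q) :
    (c.index p : ℕ) ≤ c.index q := by
  by_contra hlt
  push_neg at hlt
  have h1 : (q : ℕ) < c.sizeUpTo ((c.index q : ℕ) + 1) := by
    simpa using c.lt_sizeUpTo_index_succ q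
  have h2 : c.sizeUpTo ((c.index q : ℕ) + 1) ≤ c.sizeUpTo (c.index p) :=
    c.monotone_sizeUpTo hlt
  have h3 := c.sizeUpTo_index_le p
  omega

lemma claimA {n : ℕ} {c : Composition n} (hs : WordHasContent c (sortedWord c))
    (w : Fin n → ℕ) (hw : WordHasContent c w) (p : Fin n)
    (ih : ∀ q : Fin n, (q : ℕ) < p → w q = sortedWord c q) :
    (c.index p : ℕ) + 1 ≤ w p := by
  classical
  by_contra hle
  push_neg at hle
  obtain ⟨h1, _⟩ := hw.1 p
  set m := w p - 1 with hm
  have hwp : w p = m + 1 := by omega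
  have hmlt : m < (c.index p : ℕ) := by omega
  have hmlen : m < c.length := lt_of_lt_of_le hmlt (le_of_lt (c.index p).isLt)
  set j : Fin c.length := ⟨m, hmlen⟩ with hj
  have hA : (Finset.univ.filter fun q : Fin n => sortedWord c q = m + 1).card = c.blocksFun j :=
    hs.2 j
  have hW : (Finset.univ.filter fun q : Fin n => w q = m + 1).card = c.blocksFun j := hw.2 j
  have hsub : insert p (Finset.univ.filter fun q : Fin n => sortedWord c q = m + 1) ⊆
      Finset.univ.filter fun q : Fin n => w q = m + 1 := by
    intro q hq
    rcases Finset.mem_insert.1 hq with rfl | hq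
    · simpa using hwp
    · simp only [Finset.mem_filter, Finset.mem_univ, true_and] at hq ⊢
      simp only [sortedWord] at hq
      have hidx : (c.index q : ℕ) = m := by omega
      have hqp : (q : ℕ) < p := by
        by_contra hc
        push_neg at hc
        have := index_mono c hc
        omega
      rw [ih q hqp]
      simp only [sortedWord]
      omega
  have hpnot : p ∉ Finset.univ.filter fun q : Fin n => sortedWord c q = m + 1 := by
    rw [Finset.mem_filter]
    simp only [Finset.mem_filter, Finset.mem_univ, true_and, sortedWord]
    omega
  have hcard := Finset.card_le_card hsub
  rw [Finset.card_insert_of_notMem hpnot, hA, hW] at hcard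
  omega

lemma eq_sorted_of_step {n : ℕ} {c : Composition n} (w : Fin n → ℕ)
    (step : ∀ p : Fin n,
      (∀ q : Fin n, (q : ℕ) < p → w q = sortedWord c q) → w p = sortedWord c p) :
    w = sortedWord c := by
  have H : ∀ k : ℕ, ∀ p : Fin n, (p : ℕ) < k → w p = sortedWord c p := by
    intro k
    induction k with
    | zero => intro p hp; omega
    | succ k ihk =>
      intro p hp
      rcases Nat.lt_or_ge (p : ℕ) k with h | h
      · exact ihk p h
      · exact step p fun q hq => ihk q (by omega)
  funext p
  exact H n p p.isLt

lemma eq_sorted_of_descents {n : ℕ} {c : Composition n}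
    (hs : WordHasContent c (sortedWord c))
    (w : Fin n → ℕ) (hw : WordHasContent c w) (hy : IsYWordF w)
    (hdes : ∀ p q : Fin n, (q : ℕ) = (p : ℕ) + 1 → (c.index p : ℕ) = c.index q → w q ≤ w p) :
    w = sortedWord c := by
  apply eq_sorted_of_step
  intro p ih
  have hA := claimA hs w hw p ih
  have hB : w p ≤ (c.index p : ℕ) + 1 := by
    by_contra hgt
    push_neg at hgt
    set d := w p - 2 with hd
    have hwp : w p = d + 2 := by omega
    obtain ⟨q, hqp, hq⟩ := hy p d hwp
    have hqval : (q : ℕ) < p := hqp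
    have hq' : sortedWord c q = d + 1 := by rw [← ih q hqval]; exact hq
    simp only [sortedWord] at hq'
    have hidxq : (c.index q : ℕ) = d := by omega
    have hle : (c.index q : ℕ) ≤ c.index p := index_mono c (le_of_lt hqval)
    have hdp : (c.index p : ℕ) = d := by omega
    have hp1 : 1 ≤ (p : ℕ) := by omega
    have hp'lt : (p : ℕ) - 1 < n := by have := p.isLt; omega
    set p' : Fin n := ⟨(p : ℕ) - 1, hp'lt⟩ with hp'
    have hqp' : (q : ℕ) ≤ (p' : ℕ) := by simp only [hp']; omega
    have hi1 : (c.index q : ℕ) ≤ c.index p' := index_mono c hqp'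
    have hi2 : (c.index p' : ℕ) ≤ c.index p := index_mono c (by simp only [hp']; omega)
    have hipp : (c.index p' : ℕ) = c.index p := by omega
    have hd2 := hdes p' p (by simp only [hp']; omega) hipp
    have hihp' := ih p' (by simp only [hp']; omega)
    simp only [sortedWord] at hihp'
    omega
  simp only [sortedWord]
  omega

lemma eq_sorted_of_monotone {n : ℕ} {c : Composition n}
    (hs : WordHasContent c (sortedWord c))
    (w : Fin n → ℕ) (hw : WordHasContent c w)
    (hmono : ∀ p q : Fin n, (p : ℕ) ≤ q → w p ≤ w q) :
    w = sortedWord c := by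
  classical
  apply eq_sorted_of_step
  intro p ih
  have hA := claimA hs w hw p ih
  have hB : w p ≤ (c.index p : ℕ) + 1 := by
    by_contra hgt
    push_neg at hgt
    set j := c.index p with hjdef
    have hsub : (Finset.univ.filter fun q : Fin n => w q = (j : ℕ) + 1) ⊆
        (Finset.univ.filter fun q : Fin n => sortedWord c q = (j : ℕ) + 1).erase p := by
      intro q hq
      simp only [Finset.mem_filter, Finset.mem_univ, true_and] at hq
      have hqp : (q : ℕ) < p := by
        by_contra hc
        push_neg at hc
        have := hmono p q hc
        omega
      have hqs : sortedWord c q = (j : ℕ) + 1 := by rw [← ih q hqp]; exact hq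
      refine Finset.mem_erase.2 ⟨?_, ?_⟩
      · intro h
        rw [h] at hqp
        omega
      · simp only [Finset.mem_filter, Finset.mem_univ, true_and]
        exact hqs
    have hpmem : p ∈ Finset.univ.filter fun q : Fin n => sortedWord c q = (j : ℕ) + 1 := by
      rw [Finset.mem_filter]
      simp only [Finset.mem_filter, Finset.mem_univ, true_and, sortedWord]
      rw [hjdef]
    have hcard := Finset.card_le_card hsub
    rw [hw.2 j, Finset.card_erase_of_mem hpmem, hs.2 j] at hcard
    have := c.one_le_blocksFun j
    omega
  simp only [sortedWord]
  omega

lemma content_comp {n : ℕ} {c : Composition n} (w : Fin n → ℕ)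
    (hw : WordHasContent c w) (σ : Equiv.Perm (Fin n)) :
    WordHasContent c (w ∘ σ) := by
  classical
  constructor
  · intro p; exact hw.1 (σ p)
  · intro j
    rw [← hw.2 j]
    apply Finset.card_equiv σ
    intro a
    simp [Function.comp]

lemma isY_swap {n : ℕ} (w : Fin n → ℕ) (hy : IsYWordF w) (p q : Fin n)
    (hpq : (q : ℕ) = (p : ℕ) + 1) (hd : w q < w p) :
    IsYWordF (w ∘ Equiv.swap p q) := by
  intro r cc hr
  have hr' : w (Equiv.swap p q r) = cc + 2 := hr
  by_cases hrp : r = p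
  · subst hrp
    rw [Equiv.swap_apply_left] at hr'
    obtain ⟨t, htlt, htw⟩ := hy q cc hr'
    have htq : (t : ℕ) < (q : ℕ) := htlt
    have htp : (t : ℕ) < (r : ℕ) := by
      rcases Nat.lt_or_ge (t : ℕ) (r : ℕ) with h | h
      · exact h
      · exfalso
        have : t = r := Fin.ext (by omega)
        rw [this] at htw
        omega
    have htnp : t ≠ r := fun h => by rw [h] at htp; omega
    have htnq : t ≠ q := fun h => by rw [h] at htq; omega
    refine ⟨t, htp, ?_⟩
    simp only [Function.comp_apply, Equiv.swap_apply_of_ne_of_ne htnp htnq]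
    exact htw
  by_cases hrq : r = q
  · subst hrq
    rw [Equiv.swap_apply_right] at hr'
    obtain ⟨t, htlt, htw⟩ := hy p cc hr'
    have htp : (t : ℕ) < (p : ℕ) := htlt
    have htnp : t ≠ p := fun h => by rw [h] at htp; omega
    have htnq : t ≠ r := fun h => by rw [h] at htp; omega
    refine ⟨t, by rw [Fin.lt_def]; omega, ?_⟩
    simp only [Function.comp_apply, Equiv.swap_apply_of_ne_of_ne htnp htnq]
    exact htw
  · rw [Equiv.swap_apply_of_ne_of_ne hrp hrq] at hr'
    obtain ⟨t, htlt, htw⟩ := hy r cc hr'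
    have hrnp : (r : ℕ) ≠ p := fun h => hrp (Fin.ext h)
    have hrnq : (r : ℕ) ≠ q := fun h => hrq (Fin.ext h)
    have htr : (t : ℕ) < r := htlt
    by_cases htp : t = p
    · subst htp
      refine ⟨q, by rw [Fin.lt_def]; omega, ?_⟩
      simp only [Function.comp_apply, Equiv.swap_apply_right]
      exact htw
    by_cases htq : t = q
    · subst htq
      refine ⟨p, by rw [Fin.lt_def]; omega, ?_⟩
      simp only [Function.comp_apply, Equiv.swap_apply_left]
      exact htw
    · refine ⟨t, htlt, ?_⟩
      simp only [Function.comp_apply, Equiv.swap_apply_of_ne_of_ne htp htq]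
      exact htw

/-- The number of inversions of a word. -/
def invCount {n : ℕ} (w : Fin n → ℕ) : ℕ :=
  (Finset.univ.filter fun pq : Fin n × Fin n => pq.1 < pq.2 ∧ w pq.2 < w pq.1).card

lemma invCount_swap_lt {n : ℕ} (w : Fin n → ℕ) (p q : Fin n)
    (hpq : (q : ℕ) = (p : ℕ) + 1) (hd : w q < w p) :
    invCount (w ∘ Equiv.swap p q) < invCount w := by
  classical
  set σ := Equiv.swap p q with hσ
  set Iu := Finset.univ.filter
      (fun pq : Fin n × Fin n => pq.1 < pq.2 ∧ (w ∘ σ) pq.2 < (w ∘ σ) pq.1) with hIu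
  set Iw := Finset.univ.filter
      (fun pq : Fin n × Fin n => pq.1 < pq.2 ∧ w pq.2 < w pq.1) with hIw
  have hmem : (p, q) ∈ Iw := by
    simp only [hIw, Finset.mem_filter, Finset.mem_univ, true_and]
    exact ⟨by rw [Fin.lt_def]; omega, hd⟩
  have hmaps : ∀ ab ∈ Iu, (σ ab.1, σ ab.2) ∈ Iw.erase (p, q) := by
    intro ab hab
    simp only [hIu, Finset.mem_filter, Finset.mem_univ, true_and,
      Function.comp_apply] at hab
    obtain ⟨hab1, hab2⟩ := hab
    obtain ⟨a, b⟩ := ab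
    simp only at hab1 hab2 ⊢
    have hablt : (a : ℕ) < b := hab1
    refine Finset.mem_erase.2 ⟨?_, ?_⟩
    · intro h
      have h1 : σ a = p := congrArg Prod.fst h
      have h2 : σ b = q := congrArg Prod.snd h
      have ha : a = q := by
        have := congrArg σ h1
        rwa [hσ, Equiv.swap_apply_self, Equiv.swap_apply_left] at this
      have hb : b = p := by
        have := congrArg σ h2
        rwa [hσ, Equiv.swap_apply_self, Equiv.swap_apply_right] at this
      subst ha; subst hb
      omega
    · simp only [hIw, Finset.mem_filter, Finset.mem_univ, true_and]
      refine ⟨?_, hab2⟩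
      rw [Fin.lt_def]
      by_cases hap : a = p
      · subst hap
        by_cases hbq : b = q
        · exfalso
          subst hbq
          simp only [hσ, Equiv.swap_apply_left, Equiv.swap_apply_right] at hab2
          omega
        · have hbnp : b ≠ a := fun h => by rw [h] at hab1; exact lt_irrefl _ hab1
          have hbq' : (b : ℕ) ≠ q := fun h => hbq (Fin.ext h)
          rw [hσ, Equiv.swap_apply_left, Equiv.swap_apply_of_ne_of_ne hbnp hbq]
          omega
      by_cases haq : a = q
      · subst haq
        have hbnp : b ≠ p := fun h => by rw [h] at hablt; omega
        have hbnq : b ≠ a := fun h => by rw [h] at hab1; exact lt_irrefl _ hab1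
        rw [hσ, Equiv.swap_apply_right, Equiv.swap_apply_of_ne_of_ne hbnp hbnq]
        omega
      · have hap' : (a : ℕ) ≠ p := fun h => hap (Fin.ext h)
        have haq' : (a : ℕ) ≠ q := fun h => haq (Fin.ext h)
        rw [hσ, Equiv.swap_apply_of_ne_of_ne hap haq]
        by_cases hbp : b = p
        · subst hbp
          rw [Equiv.swap_apply_left]
          omega
        by_cases hbq : b = q
        · subst hbq
          rw [Equiv.swap_apply_right]
          omega
        · rw [Equiv.swap_apply_of_ne_of_ne hbp hbq]
          omega
  have hinj : Set.InjOn (fun ab : Fin n × Fin n => (σ ab.1, σ ab.2)) Iu := by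
    intro x _ y _ hxy
    have h1 : σ x.1 = σ y.1 := congrArg Prod.fst hxy
    have h2 : σ x.2 = σ y.2 := congrArg Prod.snd hxy
    exact Prod.ext (σ.injective h1) (σ.injective h2)
  have hle : Iu.card ≤ (Iw.erase (p, q)).card :=
    Finset.card_le_card_of_injOn _ hmaps hinj
  rw [Finset.card_erase_of_mem hmem] at hle
  have hpos : 0 < Iw.card := Finset.card_pos.2 ⟨_, hmem⟩
  simp only [invCount, ← hIu, ← hIw]
  omega

lemma mono_of_no_descent {n : ℕ} (w : Fin n → ℕ)
    (h : ∀ p q : Fin n, (q : ℕ) = (p : ℕ) + 1 → w p ≤ w q) :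
    ∀ p q : Fin n, (p : ℕ) ≤ q → w p ≤ w q := by
  have key : ∀ d : ℕ, ∀ p q : Fin n, (q : ℕ) = (p : ℕ) + d → w p ≤ w q := by
    intro d
    induction d with
    | zero =>
      intro p q h'
      have : p = q := Fin.ext (by omega)
      rw [this]
    | succ d ihd =>
      intro p q h'
      have hq1 : (p : ℕ) + d < n := by have := q.isLt; omega
      exact le_trans (ihd p ⟨(p : ℕ) + d, hq1⟩ rfl) (h ⟨(p : ℕ) + d, hq1⟩ q (by simp; omega))
  intro p q h'
  exact key ((q : ℕ) - p) p q (by omega)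

end VmodAux

open VmodAux in
/-- Every module endomorphism `f` of `V_α` (a linear endomorphism commuting with the
0-Hecke action) satisfies `f(Ŝ_α) = r • Ŝ_α` for some scalar `r`; consequently every
endomorphism of `V_α` is the scalar `r`, i.e. the endomorphism ring of `V_α` is
isomorphic to the ground field. -/
theorem Vmod_endomorphisms_scalar (n : ℕ) (c : Composition n)
    (hs : WordHasContent c (sortedWord c) ∧ IsYWordF (sortedWord c))
    (f : Vmod n c →ₗ[ℚ] Vmod n c)
    (hcomm : ∀ i : Fin (n - 1), f ∘ₗ heckeOp n c i = heckeOp n c i ∘ₗ f) :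
    ∃ r : ℚ,
      f (Finsupp.single ⟨sortedWord c, hs⟩ 1) =
        r • Finsupp.single ⟨sortedWord c, hs⟩ 1 ∧
      f = r • LinearMap.id := by
  classical
  set S : YW n c := ⟨sortedWord c, hs⟩ with hSdef
  set v : Vmod n c := f (Finsupp.single S 1) with hvdef
  set r : ℚ := v S with hrdef
  -- `heckeOp i` fixes the sorted basis vector when `i, i+1` lie in the same block
  have hfix : ∀ i : Fin (n - 1), (c.index (posL i) : ℕ) = c.index (posR i) →
      heckeOp n c i (Finsupp.single S 1) = Finsupp.single S 1 := by
    intro i hi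
    have hword : heckeWord i (sortedWord c) = sortedWord c := by
      rw [heckeWord_def, if_neg]
      simp only [sortedWord]
      omega
    have h1 := heckeOp_single (c := c) i S
    have hSval : S.val = sortedWord c := rfl
    rw [hSval, hword] at h1
    rw [h1, dif_pos hs]
  -- v is fixed by those `heckeOp i`
  have heig : ∀ i : Fin (n - 1), (c.index (posL i) : ℕ) = c.index (posR i) →
      heckeOp n c i v = v := by
    intro i hi
    have := congrArg (fun g : Vmod n c →ₗ[ℚ] Vmod n c => g (Finsupp.single S 1)) (hcomm i)
    simp only [LinearMap.comp_apply] at this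
    rw [hfix i hi] at this
    rw [← hvdef] at this
    exact this.symm
  -- v vanishes away from S
  have hvanish : ∀ w : YW n c, w ≠ S → v w = 0 := by
    intro w hw
    have hne : w.val ≠ sortedWord c := fun h => hw (Subtype.ext h)
    have hcon : ¬ ∀ p q : Fin n, (q : ℕ) = (p : ℕ) + 1 →
        (c.index p : ℕ) = c.index q → w.val q ≤ w.val p := fun hdes =>
      hne (eq_sorted_of_descents hs.1 w.val w.2.1 w.2.2 hdes)
    push_neg at hcon
    obtain ⟨p, q, hpq, hidx, hlt⟩ := hcon
    have hpn : (p : ℕ) < n - 1 := by have := q.isLt; omega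
    set i : Fin (n - 1) := ⟨p, hpn⟩ with hidef
    have hpl : posL i = p := Fin.ext rfl
    have hqr : posR i = q := Fin.ext (by simp [posR, hidef]; omega)
    have hev := heig i (by rw [hpl, hqr]; exact hidx)
    have hz : (heckeOp n c i v) w = 0 := by
      simp only [heckeOp]
      rw [Finsupp.lsum_apply, Finsupp.sum_apply]
      apply Finset.sum_eq_zero
      intro u hu
      simp only [LinearMap.toSpanSingleton_apply]
      by_cases hcond : WordHasContent c (heckeWord i u.val) ∧ IsYWordF (heckeWord i u.val)
      · rw [dif_pos hcond]
        have hneq : (⟨heckeWord i u.val, hcond⟩ : YW n c) ≠ w := by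
          intro h
          have hval : heckeWord i u.val = w.val := congrArg Subtype.val h
          rw [heckeWord_def, hpl, hqr] at hval
          by_cases hcase : u.val p < u.val q
          · rw [if_pos hcase] at hval
            have e1 := congrFun hval p
            have e2 := congrFun hval q
            simp only [Function.comp_apply, Equiv.swap_apply_left,
              Equiv.swap_apply_right] at e1 e2
            omega
          · rw [if_neg hcase] at hval
            rw [hval] at hcase
            omega
        rw [Finsupp.smul_apply, Finsupp.single_apply, if_neg hneq, smul_zero]
      · rw [dif_neg hcond, smul_zero, Finsupp.coe_zero, Pi.zero_apply]
    rw [hev] at hz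
    exact hz
  have hvsingle : v = r • Finsupp.single S 1 := by
    ext w
    by_cases hw : w = S
    · subst hw
      rw [Finsupp.smul_apply, Finsupp.single_eq_same, smul_eq_mul, mul_one]
    · rw [hvanish w hw, Finsupp.smul_apply, Finsupp.single_eq_of_ne hw, smul_zero]
  -- every basis vector is a scalar r multiple under f, by induction on inversions
  have hgen : ∀ w : YW n c, f (Finsupp.single w 1) = r • Finsupp.single w 1 := by
    have key : ∀ N : ℕ, ∀ w : YW n c, invCount w.val < N →
        f (Finsupp.single w 1) = r • Finsupp.single w 1 := by
      intro N
      induction N with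
      | zero => intro w hN; omega
      | succ N ihN =>
        intro w hN
        by_cases hw : w = S
        · subst hw
          rw [← hvdef, hvsingle]
        · have hne : w.val ≠ sortedWord c := fun h => hw (Subtype.ext h)
          have hcon : ¬ ∀ p q : Fin n, (q : ℕ) = (p : ℕ) + 1 → w.val p ≤ w.val q :=
            fun hnd => hne (eq_sorted_of_monotone hs.1 w.val w.2.1
              (mono_of_no_descent w.val hnd))
          push_neg at hcon
          obtain ⟨p, q, hpq, hlt⟩ := hcon
          set u : Fin n → ℕ := w.val ∘ Equiv.swap p q with hudef
          have hu : WordHasContent c u ∧ IsYWordF u :=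
            ⟨content_comp w.val w.2.1 _, isY_swap w.val w.2.2 p q hpq hlt⟩
          have hinv : invCount u < invCount w.val := invCount_swap_lt w.val p q hpq hlt
          have hiu := ihN ⟨u, hu⟩ (show invCount u < N by omega)
          have hpn : (p : ℕ) < n - 1 := by have := q.isLt; omega
          set i : Fin (n - 1) := ⟨p, hpn⟩ with hidef
          have hpl : posL i = p := Fin.ext rfl
          have hqr : posR i = q := Fin.ext (by simp [posR, hidef]; omega)
          have hword : heckeWord i u = w.val := by
            rw [heckeWord_def, hpl, hqr, if_pos]
            · funext x
              simp only [hudef, Function.comp_apply, Equiv.swap_apply_self]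
            · show u p < u q
              simp only [hudef, Function.comp_apply, Equiv.swap_apply_left,
                Equiv.swap_apply_right]
              exact hlt
          have hcond : WordHasContent c (heckeWord i u) ∧ IsYWordF (heckeWord i u) := by
            rw [hword]; exact w.2
          have hstep : heckeOp n c i (Finsupp.single (⟨u, hu⟩ : YW n c) 1) =
              Finsupp.single w 1 := by
            rw [heckeOp_single, dif_pos hcond]
            have : (⟨heckeWord i u, hcond⟩ : YW n c) = w := Subtype.ext hword
            rw [this]
          calc f (Finsupp.single w 1)
              = f (heckeOp n c i (Finsupp.single (⟨u, hu⟩ : YW n c) 1)) := by rw [hstep]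
            _ = heckeOp n c i (f (Finsupp.single (⟨u, hu⟩ : YW n c) 1)) := by
                have := congrArg (fun g : Vmod n c →ₗ[ℚ] Vmod n c =>
                  g (Finsupp.single (⟨u, hu⟩ : YW n c) 1)) (hcomm i)
                simpa only [LinearMap.comp_apply] using this
            _ = heckeOp n c i (r • Finsupp.single (⟨u, hu⟩ : YW n c) 1) := by rw [hiu]
            _ = r • heckeOp n c i (Finsupp.single (⟨u, hu⟩ : YW n c) 1) :=
                map_smul _ _ _
            _ = r • Finsupp.single w 1 := by rw [hstep]
    intro w
    exact key (invCount w.val + 1) w (by omega)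
  refine ⟨r, hgen S, ?_⟩
  apply Finsupp.lhom_ext
  intro w b
  have hb : Finsupp.single w b = b • Finsupp.single w (1 : ℚ) := by
    rw [Finsupp.smul_single', mul_one]
  rw [hb, map_smul, hgen w, LinearMap.smul_apply, LinearMap.id_apply, smul_comm]
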